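/- Local slice theorem, part (c): With s a local slice of degree d and denominator c, and π: R_c → (R_c)^{G_a} as above, the composition R_c → R_c[z] → (R_c)^{G_a}[z] of φ followed by coefficientwise π is an injective ring homomorphism, and it makes (R_c)^{G_a}[z] into an R_c-module generated by d elements (the images of 1, z, ..., z^{d−1}). In particular if d = 1 it is an isomorphism. -/

import Mathlib

open Polynomial

def IsGaCoaction {R : Type*} [CommRing R] (φ : R →+* Polynomial R) : Prop :=
  (∀ s : R, (φ s).eval 0 = s) ∧
  (∀ s : R, (φ s).map φ =
      (φ s).eval₂ ((Polynomial.C : Polynomial R →+* Polynomial (Polynomial R)).comp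
        Polynomial.C) (Polynomial.X + Polynomial.C Polynomial.X))

/-- local slice theorem, part (c): with `π : R_c → (R_c)^{G_a}` the
retraction of part (b), the composition `R_c → R_c[z] → (R_c)^{G_a}[z]` of `φc` followed
by coefficientwise `π` is injective, and every polynomial with invariant coefficients is
an `R_c`-linear combination (via this map) of `1, z, …, z^{d-1}`; in particular for
`d = 1` the map is onto the polynomials with invariant coefficients, hence an
isomorphism onto `(R_c)^{G_a}[z]`. -/
theorem stmt7 {K R : Type*} [CommRing K] [CommRing R] [Algebra K R]
    (φ : R →ₐ[K] Polynomial R) (hφ : IsGaCoaction φ.toRingHom)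
    (s : R) (hs : φ s ≠ Polynomial.C s)
    (d : ℕ) (hd : (φ s).degree = (d : ℕ))
    (c : R) (hc : c = (φ s).leadingCoeff)
    (φc : Localization.Away c →+* Polynomial (Localization.Away c))
    (hext : ∀ r : R, φc (algebraMap R (Localization.Away c) r) =
      (φ r).map (algebraMap R (Localization.Away c)))
    (hslice : ∀ a : Localization.Away c,
      (φc a).degree < (φ s).degree → φc a = Polynomial.C a)
    (π : Localization.Away c →+* Localization.Away c)
    (hπinv : ∀ a : Localization.Away c, φc (π a) = Polynomial.C (π a))
    (hπid : ∀ a : Localization.Away c, φc a = Polynomial.C a → π a = a)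
    (hπker : RingHom.ker π = Ideal.span {algebraMap R (Localization.Away c) s}) :
    Function.Injective (fun a : Localization.Away c => (φc a).map π) ∧
    (∀ p : Polynomial (Localization.Away c),
      (∀ i : ℕ, φc (p.coeff i) = Polynomial.C (p.coeff i)) →
      ∃ f : Fin d → Localization.Away c,
        p = ∑ i : Fin d, (φc (f i)).map π * Polynomial.X ^ (i : ℕ)) ∧
    (d = 1 → ∀ p : Polynomial (Localization.Away c),
      (∀ i : ℕ, φc (p.coeff i) = Polynomial.C (p.coeff i)) →
      ∃ a : Localization.Away c, p = (φc a).map π) := by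
  rcases subsingleton_or_nontrivial (Localization.Away c) with hsub | hnt
  · exact ⟨Function.injective_of_subsingleton _,
      fun p _ => ⟨0, Subsingleton.elim _ _⟩,
      fun _ p _ => ⟨0, Subsingleton.elim _ _⟩⟩
  have hcounit : ∀ r : R, (φ r).eval 0 = r := hφ.1
  -- d ≥ 1
  have hd1 : 1 ≤ d := by
    rcases Nat.eq_zero_or_pos d with h0 | h1
    · exfalso
      apply hs
      subst h0
      have hdeg0 : (φ s).degree ≤ 0 := le_of_eq (by simpa using hd)
      have := eq_C_of_degree_le_zero hdeg0
      rwa [coeff_zero_eq_eval_zero, hcounit] at this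
    · exact h1
  have hnat : (φ s).natDegree = d := natDegree_eq_of_degree_eq_some hd
  have hcoefftop : ∀ j, d < j → (φ s).coeff j = 0 := fun j hj =>
    coeff_eq_zero_of_natDegree_lt (by omega)
  -- counit for φc
  have ev0A : ∀ r : R, (φc (algebraMap R (Localization.Away c) r)).eval 0
      = algebraMap R (Localization.Away c) r := by
    intro r
    rw [hext, ← coeff_zero_eq_eval_zero, coeff_map, coeff_zero_eq_eval_zero, hcounit]
  have ev0 : ∀ a : Localization.Away c, (φc a).eval 0 = a := by
    intro a
    obtain ⟨⟨r, m⟩, hx⟩ := IsLocalization.surj (Submonoid.powers c) a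
    have hm : IsUnit (algebraMap R (Localization.Away c) (m : R)) :=
      IsLocalization.map_units _ m
    have h1 : (φc a).eval 0 * algebraMap R (Localization.Away c) (m : R)
        = a * algebraMap R (Localization.Away c) (m : R) := by
      calc (φc a).eval 0 * algebraMap R (Localization.Away c) (m : R)
          = (φc a).eval 0 * (φc (algebraMap R (Localization.Away c) (m : R))).eval 0 := by
            rw [ev0A]
        _ = (φc (a * algebraMap R (Localization.Away c) (m : R))).eval 0 := by
            rw [map_mul, eval_mul]
        _ = (φc (algebraMap R (Localization.Away c) r)).eval 0 := by rw [hx]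
        _ = algebraMap R (Localization.Away c) r := ev0A r
        _ = a * algebraMap R (Localization.Away c) (m : R) := hx.symm
    exact hm.mul_left_cancel (by rw [mul_comm ((φc a).eval 0), mul_comm a] at h1; exact h1)
  -- g = φc (A s)
  have hg : φc (algebraMap R (Localization.Away c) s)
      = (φ s).map (algebraMap R (Localization.Away c)) := hext s
  have hAc : IsUnit (algebraMap R (Localization.Away c) c) :=
    IsLocalization.Away.algebraMap_isUnit c
  have hgd : ((φ s).map (algebraMap R (Localization.Away c))).coeff d
      = algebraMap R (Localization.Away c) c := by
    rw [coeff_map]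
    congr 1
    rw [hc, leadingCoeff, hnat]
  have hgtop : ∀ j, d < j → ((φ s).map (algebraMap R (Localization.Away c))).coeff j = 0 := by
    intro j hj
    rw [coeff_map, hcoefftop j hj, map_zero]
  have hgnatle : ((φ s).map (algebraMap R (Localization.Away c))).natDegree ≤ d :=
    le_trans natDegree_map_le (le_of_eq hnat)
  have hgndeg : ((φ s).map (algebraMap R (Localization.Away c))).natDegree = d :=
    le_antisymm hgnatle (le_natDegree_of_ne_zero (by rw [hgd]; exact hAc.ne_zero))
  have hglead : ((φ s).map (algebraMap R (Localization.Away c))).leadingCoeff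
      = algebraMap R (Localization.Away c) c := by
    rw [leadingCoeff, hgndeg, hgd]
  -- u, v
  have hu : IsUnit (π (algebraMap R (Localization.Away c) c)) := hAc.map π
  obtain ⟨w, hw⟩ := hu
  set u : Localization.Away c := π (algebraMap R (Localization.Away c) c) with hudef
  set v : Localization.Away c := ((w⁻¹ : (Localization.Away c)ˣ) : Localization.Away c) with hvdef
  have huv : u * v = 1 := by rw [← hw]; exact w.mul_inv
  have hu' : IsUnit u := ⟨w, hw⟩
  -- h := (g.map π) facts
  have hhd : (((φ s).map (algebraMap R (Localization.Away c))).map π).coeff d = u := by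
    rw [coeff_map, hgd]
  have hhnatle : (((φ s).map (algebraMap R (Localization.Away c))).map π).natDegree ≤ d :=
    le_trans natDegree_map_le hgnatle
  have hhndeg : (((φ s).map (algebraMap R (Localization.Away c))).map π).natDegree = d :=
    le_antisymm hhnatle (le_natDegree_of_ne_zero (by rw [hhd]; exact hu'.ne_zero))
  have hhlead : (((φ s).map (algebraMap R (Localization.Away c))).map π).leadingCoeff = u := by
    rw [leadingCoeff, hhndeg, hhd]
  -- invariance helpers
  have hΦC : ∀ x : Localization.Away c, φc x = C x → (φc x).map π = C x := by
    intro x hx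
    rw [hx, map_C, hπid x hx]
  have hφu : φc u = C u := hπinv _
  have hφv : φc v = C v := by
    have hCuv : (C u : Polynomial (Localization.Away c)) * C v = 1 := by
      rw [← C_mul, huv, C_1]
    have h1 : φc v * C u = 1 := by
      rw [← hφu, ← map_mul, mul_comm v u, huv, map_one]
    calc φc v = φc v * (C u * C v) := by rw [hCuv, mul_one]
      _ = (φc v * C u) * C v := by ring
      _ = C v := by rw [h1, one_mul]
  -- injectivity
  have hker : ∀ n : ℕ, ∀ a : Localization.Away c,
      (φc a).natDegree = n → (φc a).map π = 0 → a = 0 := by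
    intro n
    induction n using Nat.strong_induction_on with
    | _ n ih =>
      intro a hn hΦa
      have hc0 : (φc a).coeff 0 ∈ RingHom.ker π := by
        have : π ((φc a).coeff 0) = 0 := by
          rw [← coeff_map, hΦa, coeff_zero]
        exact this
      rw [hπker, Ideal.mem_span_singleton] at hc0
      obtain ⟨b, hb⟩ := hc0
      have ha : a = algebraMap R (Localization.Away c) s * b := by
        rw [← ev0 a, ← coeff_zero_eq_eval_zero, hb]
      by_cases hb0 : b = 0
      · rw [ha, hb0, mul_zero]
      · exfalso
        apply hb0
        have hφab : φc a = (φ s).map (algebraMap R (Localization.Away c)) * φc b := by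
          rw [ha, map_mul, hg]
        have hΦb : (φc b).map π = 0 := by
          have h2 : (((φ s).map (algebraMap R (Localization.Away c))).map π)
              * ((φc b).map π) = 0 := by
            rw [← Polynomial.map_mul, ← hφab, hΦa]
          exact (isUnit_leadingCoeff_mul_right_eq_zero_iff (by rw [hhlead]; exact hu')).mp h2
        have hφb0 : φc b ≠ 0 := by
          intro h0
          apply hb0
          rw [← ev0 b, h0, eval_zero]
        have hlc : ((φ s).map (algebraMap R (Localization.Away c))).leadingCoeff
            * (φc b).leadingCoeff ≠ 0 := by
          rw [hglead]
          intro h0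
          exact hφb0 (leadingCoeff_eq_zero.mp ((hAc.mul_right_eq_zero).mp h0))
        have hdeg : (φc a).natDegree = d + (φc b).natDegree := by
          rw [hφab, natDegree_mul' hlc, hgndeg]
        exact ih ((φc b).natDegree) (by omega) b rfl hΦb
  have hinj : Function.Injective (fun a : Localization.Away c => (φc a).map π) := by
    intro a b hab
    simp only at hab
    have h0 : (φc (a - b)).map π = 0 := by
      rw [map_sub, Polynomial.map_sub, hab, sub_self]
    exact sub_eq_zero.mp (hker _ (a - b) rfl h0)
  -- the key X^d identity
  have hXd : (X : Polynomial (Localization.Away c)) ^ d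
      = C v * (((φ s).map (algebraMap R (Localization.Away c))).map π)
        - ∑ j ∈ Finset.range d,
            C (v * π (((φ s).map (algebraMap R (Localization.Away c))).coeff j)) * X ^ j := by
    ext k
    rw [coeff_sub, coeff_C_mul, coeff_map, finset_sum_coeff]
    simp only [coeff_C_mul, coeff_X_pow, mul_ite, mul_one, mul_zero]
    rw [Finset.sum_ite_eq (Finset.range d) k
      (fun j => v * π (((φ s).map (algebraMap R (Localization.Away c))).coeff j))]
    rcases lt_trichotomy k d with hk | hk | hk
    · simp only [Finset.mem_range.mpr hk, if_pos, if_neg (by omega : ¬ k = d)]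
      ring
    · subst hk
      rw [if_pos rfl, if_neg (by simp), hgd, ← hudef, sub_zero, mul_comm v u]
      exact huv.symm
    · rw [if_neg (by omega : ¬ k = d), if_neg (by simp; omega),
        hgtop k hk, map_zero, mul_zero, sub_zero]
  -- closure lemmas
  have Mzero : (0 : Polynomial (Localization.Away c))
      = ∑ i : Fin d, (φc ((0 : Fin d → Localization.Away c) i)).map π * X ^ (i : ℕ) := by
    simp
  have Madd : ∀ p q : Polynomial (Localization.Away c),
      (∃ f : Fin d → Localization.Away c,
        p = ∑ i : Fin d, (φc (f i)).map π * X ^ (i : ℕ)) →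
      (∃ f : Fin d → Localization.Away c,
        q = ∑ i : Fin d, (φc (f i)).map π * X ^ (i : ℕ)) →
      (∃ f : Fin d → Localization.Away c,
        p + q = ∑ i : Fin d, (φc (f i)).map π * X ^ (i : ℕ)) := by
    rintro p q ⟨f, rfl⟩ ⟨e, rfl⟩
    refine ⟨f + e, ?_⟩
    rw [← Finset.sum_add_distrib]
    apply Finset.sum_congr rfl
    intro i _
    rw [Pi.add_apply, map_add, Polynomial.map_add, add_mul]
  have Msub : ∀ p q : Polynomial (Localization.Away c),
      (∃ f : Fin d → Localization.Away c,
        p = ∑ i : Fin d, (φc (f i)).map π * X ^ (i : ℕ)) →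
      (∃ f : Fin d → Localization.Away c,
        q = ∑ i : Fin d, (φc (f i)).map π * X ^ (i : ℕ)) →
      (∃ f : Fin d → Localization.Away c,
        p - q = ∑ i : Fin d, (φc (f i)).map π * X ^ (i : ℕ)) := by
    rintro p q ⟨f, rfl⟩ ⟨e, rfl⟩
    refine ⟨f - e, ?_⟩
    rw [← Finset.sum_sub_distrib]
    apply Finset.sum_congr rfl
    intro i _
    rw [Pi.sub_apply, map_sub, Polynomial.map_sub, sub_mul]
  have Msum : ∀ (t : Finset ℕ) (F : ℕ → Polynomial (Localization.Away c)),
      (∀ j ∈ t, ∃ f : Fin d → Localization.Away c,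
        F j = ∑ i : Fin d, (φc (f i)).map π * X ^ (i : ℕ)) →
      ∃ f : Fin d → Localization.Away c,
        (∑ j ∈ t, F j) = ∑ i : Fin d, (φc (f i)).map π * X ^ (i : ℕ) := by
    intro t
    induction t using Finset.induction_on with
    | empty => intro F _; exact ⟨0, by simpa using Mzero⟩
    | insert _ _ hnotmem =>
      rename_i j t' ihypo
      intro F hF
      rw [Finset.sum_insert hnotmem]
      exact Madd _ _ (hF j (Finset.mem_insert_self j t'))
        (ihypo F (fun k hk => hF k (Finset.mem_insert_of_mem hk)))
  -- multiplicativity helpers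
  have hΦmul : ∀ x y : Localization.Away c,
      (φc (x * y)).map π = (φc x).map π * (φc y).map π := by
    intro x y
    rw [map_mul, Polynomial.map_mul]
  have hΦv : (φc v).map π = C v := hΦC v hφv
  have hΦvs : (φc (v * algebraMap R (Localization.Away c) s)).map π
      = C v * (((φ s).map (algebraMap R (Localization.Away c))).map π) := by
    rw [hΦmul, hΦv, hg]
  have hinv_vg : ∀ j : ℕ,
      (φc (v * π (((φ s).map (algebraMap R (Localization.Away c))).coeff j))).map π
        = C (v * π (((φ s).map (algebraMap R (Localization.Away c))).coeff j)) := by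
    intro j
    apply hΦC
    rw [map_mul, hφv, hπinv, ← C_mul]
  -- claim A : Φ(a) X^n is in the span
  have claimA : ∀ n : ℕ, ∀ a : Localization.Away c,
      ∃ f : Fin d → Localization.Away c,
        (φc a).map π * X ^ n = ∑ i : Fin d, (φc (f i)).map π * X ^ (i : ℕ) := by
    intro n
    induction n using Nat.strong_induction_on with
    | _ n ih =>
      intro a
      by_cases hn : n < d
      · refine ⟨fun i => if (i : ℕ) = n then a else 0, ?_⟩
        rw [Finset.sum_eq_single (⟨n, hn⟩ : Fin d)]
        · simp
        · intro i _ hi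
          have hine : (i : ℕ) ≠ n := fun hh => hi (Fin.ext hh)
          simp [hine]
        · intro habs
          exact absurd (Finset.mem_univ _) habs
      · push_neg at hn
        have key : (φc a).map π * X ^ n
            = (φc (a * (v * algebraMap R (Localization.Away c) s))).map π * X ^ (n - d)
              - ∑ j ∈ Finset.range d,
                  (φc (a * (v * π (((φ s).map
                    (algebraMap R (Localization.Away c))).coeff j)))).map π
                    * X ^ (n - d + j) := by
          rw [hΦmul a (v * algebraMap R (Localization.Away c) s), hΦvs]
          have e2 : ∀ j ∈ Finset.range d,
              (φc (a * (v * π (((φ s).map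
                (algebraMap R (Localization.Away c))).coeff j)))).map π * X ^ (n - d + j)
              = ((φc a).map π * X ^ (n - d))
                * (C (v * π (((φ s).map (algebraMap R (Localization.Away c))).coeff j))
                    * X ^ j) := by
            intro j _
            rw [hΦmul, hinv_vg j, pow_add]
            ring
          rw [Finset.sum_congr rfl e2, ← Finset.mul_sum,
            show (φc a).map π
                * (C v * (((φ s).map (algebraMap R (Localization.Away c))).map π))
                * X ^ (n - d)
              = ((φc a).map π * X ^ (n - d))
                * (C v * (((φ s).map (algebraMap R (Localization.Away c))).map π)) by ring,
            ← mul_sub, ← hXd, mul_assoc, ← pow_add]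
          congr 2
          omega
        rw [key]
        apply Msub
        · exact ih (n - d) (by omega) _
        · apply Msum
          intro j hj
          rw [Finset.mem_range] at hj
          exact ih (n - d + j) (by omega) _
  -- part 2
  have part2 : ∀ p : Polynomial (Localization.Away c),
      (∀ i : ℕ, φc (p.coeff i) = Polynomial.C (p.coeff i)) →
      ∃ f : Fin d → Localization.Away c,
        p = ∑ i : Fin d, (φc (f i)).map π * Polynomial.X ^ (i : ℕ) := by
    intro p hp
    have hrep : p = ∑ i ∈ Finset.range (p.natDegree + 1), (φc (p.coeff i)).map π * X ^ i := by
      conv_lhs => rw [p.as_sum_range_C_mul_X_pow]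
      apply Finset.sum_congr rfl
      intro i _
      rw [hΦC _ (hp i)]
    rw [hrep]
    apply Msum
    intro j _
    exact claimA j (p.coeff j)
  refine ⟨hinj, part2, ?_⟩
  intro hdone p hp
  obtain ⟨f, hf⟩ := part2 p hp
  subst hdone
  refine ⟨f 0, ?_⟩
  rw [hf, Fin.sum_univ_one]
  simp
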